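/- Let M be a finitely generated ℕ^r-graded module over S = K[x_1,…,x_r]. Then every associated prime p of M is generated by a subset of the variables; that is, p = ⟨x_{i_1},…,x_{i_k}⟩ for some (possibly empty) subset {i_1,…,i_k} ⊆ {1,…,r}. -/

import Mathlib

open MvPolynomial DirectSum
set_option linter.unusedSectionVars false
set_option synthInstance.maxHeartbeats 1000000
set_option maxHeartbeats 2000000

variable {K : Type} [Field K] {r : ℕ}
  {M : Type} [AddCommGroup M] [Module (MvPolynomial (Fin r) K) M]
  [Module K M] [IsScalarTower K (MvPolynomial (Fin r) K) M]
  {ℳ : (Fin r →₀ ℕ) → Submodule K M}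

lemma aux_indep (hM : DirectSum.IsInternal ℳ) {ι : Type} (F : Finset ι)
    (d : ι → (Fin r →₀ ℕ)) (hd : Set.InjOn d F) (g : ι → M)
    (hg : ∀ i ∈ F, g i ∈ ℳ (d i)) (h0 : ∑ i ∈ F, g i = 0) :
    ∀ i ∈ F, g i = 0 := by
  classical
  set x : ⨁ u, ℳ u :=
    ∑ i ∈ F.attach, DirectSum.of (fun u => (ℳ u : Type)) (d i) ⟨g i, hg i i.2⟩ with hx
  have hxm : DirectSum.coeAddMonoidHom ℳ x = 0 := by
    rw [hx, map_sum]
    simp only [DirectSum.coeAddMonoidHom_of]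
    rw [Finset.sum_attach]
    exact h0
  have hx0 : x = 0 := hM.injective (by rw [hxm, map_zero])
  intro i hi
  have : x (d i) = 0 := by rw [hx0]; rfl
  have h2 : x (d i) = ⟨g i, hg i hi⟩ := by
    rw [hx, DFinsupp.finset_sum_apply]
    rw [Finset.sum_eq_single (⟨i, hi⟩ : {x // x ∈ F})]
    · exact DirectSum.of_eq_same _ _
    · intro j _ hj
      refine DirectSum.of_eq_of_ne _ _ _ ?_
      intro hdji
      exact hj (Subtype.ext (hd j.2 hi hdji.symm))
    · intro h; exact absurd (Finset.mem_attach _ _) h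
  have := h2.symm.trans this
  exact congrArg Subtype.val this

lemma aux_fiber (hM : DirectSum.IsInternal ℳ) {ι : Type} (F : Finset ι)
    (d : ι → (Fin r →₀ ℕ)) (g : ι → M)
    (hg : ∀ i ∈ F, g i ∈ ℳ (d i)) (h0 : ∑ i ∈ F, g i = 0) (δ : Fin r →₀ ℕ) :
    ∑ i ∈ F.filter (fun i => d i = δ), g i = 0 := by
  classical
  by_cases hδ : δ ∈ F.image d
  · refine aux_indep hM (F.image d) id (Function.injective_id.injOn)
      (fun δ' => ∑ i ∈ F.filter (fun i => d i = δ'), g i) ?_ ?_ δ hδ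
    · intro δ' _
      refine Submodule.sum_mem _ ?_
      intro i hi
      obtain ⟨hiF, hdi⟩ := Finset.mem_filter.mp hi
      exact hdi ▸ hg i hiF
    · rw [Finset.sum_fiberwise_of_maps_to (fun i hi => Finset.mem_image_of_mem d hi)]
      exact h0
  · have : F.filter (fun i => d i = δ) = ∅ := by
      rw [Finset.filter_eq_empty_iff]
      intro i hi hdi
      exact hδ (hdi ▸ Finset.mem_image_of_mem d hi)
    rw [this, Finset.sum_empty]

lemma aux_unique {u w v vm : Fin r →₀ ℕ} (hu : toLex u ≤ toLex w) (hv : toLex v ≤ toLex vm)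
    (h : u + v = w + vm) : u = w ∧ v = vm := by
  have h' : toLex u + toLex v = toLex w + toLex vm := by
    rw [← toLex_add, ← toLex_add, h]
  have huw : u = w := by
    rcases hu.lt_or_eq with hlt | he
    · exfalso
      have : toLex u + toLex v < toLex w + toLex vm := add_lt_add_of_lt_of_le hlt hv
      exact absurd h' this.ne
    · exact toLex.injective he
  subst huw
  exact ⟨rfl, add_left_cancel h⟩

theorem statement9 (K : Type) [Field K] (r : ℕ)
    (M : Type) [AddCommGroup M] [Module (MvPolynomial (Fin r) K) M]
    [Module K M] [IsScalarTower K (MvPolynomial (Fin r) K) M]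
    [Module.Finite (MvPolynomial (Fin r) K) M]
    (ℳ : (Fin r →₀ ℕ) → Submodule K M)
    (hM : DirectSum.IsInternal ℳ)
    (hMgr : ∀ (u v : Fin r →₀ ℕ) (c : K) (m : M), m ∈ ℳ v →
      (MvPolynomial.monomial u c) • m ∈ ℳ (u + v))
    -- p is an associated prime of M
    (p : Ideal (MvPolynomial (Fin r) K)) (hp : p.IsPrime)
    (hass : ∃ m : M, ∀ s : MvPolynomial (Fin r) K, s ∈ p ↔ s • m = 0) :
    ∃ s : Set (Fin r), p = Ideal.span (MvPolynomial.X '' s) := by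
  classical
  obtain ⟨m₀, hm₀⟩ := hass
  -- Key claim: every monomial component of an element of p lies in p.
  have key : ∀ t : ℕ, ∀ m : M,
      (∃ F : Finset (Fin r →₀ ℕ), ∃ g : (Fin r →₀ ℕ) → M, F.card ≤ t ∧
        (∀ u ∈ F, g u ∈ ℳ u) ∧ m = ∑ u ∈ F, g u) →
      (∀ s : MvPolynomial (Fin r) K, s ∈ p ↔ s • m = 0) →
      ∀ f ∈ p, ∀ u, (monomial u (coeff u f) : MvPolynomial (Fin r) K) ∈ p := by
    intro t
    induction t using Nat.strong_induction_on with
    | _ t IH =>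
      rintro m ⟨F, g, hFc, hgmem, hsum⟩ hann
      have hm0 : m ≠ 0 := by
        intro h
        apply hp.ne_top
        rw [Ideal.eq_top_iff_one, hann]
        rw [h, smul_zero]
      have hFne : F.Nonempty := by
        rcases Finset.eq_empty_or_nonempty F with h | h
        · exfalso; apply hm0; rw [hsum, h, Finset.sum_empty]
        · exact h
      -- lex-max of F
      obtain ⟨vm, hvmF, hvmax⟩ : ∃ vm ∈ F, ∀ v ∈ F, toLex v ≤ toLex vm := by
        obtain ⟨vm, hvmF, hvm⟩ := F.exists_max_image toLex hFne
        exact ⟨vm, hvmF, hvm⟩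
      have inner : ∀ n : ℕ, ∀ f ∈ p, f.support.card ≤ n →
          ∀ u, (monomial u (coeff u f) : MvPolynomial (Fin r) K) ∈ p := by
        intro n
        induction n with
        | zero =>
          intro f hf hc u
          have hf0 : f = 0 := by
            rw [← support_eq_empty, ← Finset.card_eq_zero]
            exact Nat.le_zero.mp hc
          rw [hf0, coeff_zero, monomial_zero]
          exact p.zero_mem
        | succ n IHn =>
          intro f hf hc u
          by_cases hf0 : f = 0
          · rw [hf0, coeff_zero, monomial_zero]; exact p.zero_mem
          have hfsne : f.support.Nonempty := by
            rwa [Finset.nonempty_iff_ne_empty, ne_eq, support_eq_empty]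
          obtain ⟨w, hwF, hwmax⟩ := f.support.exists_max_image toLex hfsne
          set c := coeff w f with hc_def
          have hc0 : c ≠ 0 := mem_support_iff.mp hwF
          set q : MvPolynomial (Fin r) K := monomial w c with hq_def
          -- the double sum is zero
          have hfm : f • m = 0 := (hann f).mp hf
          have hsum2 : ∑ z ∈ f.support ×ˢ F,
              (monomial z.1 (coeff z.1 f) : MvPolynomial (Fin r) K) • g z.2 = 0 := by
            rw [Finset.sum_product]
            have : ∀ u' ∈ f.support,
                (∑ v ∈ F, (monomial u' (coeff u' f) : MvPolynomial (Fin r) K) • g v)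
                = (monomial u' (coeff u' f) : MvPolynomial (Fin r) K) • m := by
              intro u' _
              rw [hsum, Finset.smul_sum]
            rw [Finset.sum_congr rfl this, ← Finset.sum_smul, support_sum_monomial_coeff,
              hfm]
          -- the top-degree part vanishes
          have hkey : q • g vm = 0 := by
            have hfib := aux_fiber hM (f.support ×ˢ F) (fun z => z.1 + z.2)
              (fun z => (monomial z.1 (coeff z.1 f) : MvPolynomial (Fin r) K) • g z.2)
              (fun z hz => by
                obtain ⟨h1, h2⟩ := Finset.mem_product.mp hz
                exact hMgr z.1 z.2 (coeff z.1 f) (g z.2) (hgmem z.2 h2))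
              hsum2 (w + vm)
            have hfilter : (f.support ×ˢ F).filter (fun z => z.1 + z.2 = w + vm)
                = {(w, vm)} := by
              ext z
              simp only [Finset.mem_filter, Finset.mem_product, Finset.mem_singleton]
              constructor
              · rintro ⟨⟨h1, h2⟩, h3⟩
                obtain ⟨e1, e2⟩ := aux_unique (hwmax z.1 h1) (hvmax z.2 h2) h3
                exact Prod.ext e1 e2
              · rintro rfl
                exact ⟨⟨hwF, hvmF⟩, rfl⟩
            rw [hfilter, Finset.sum_singleton] at hfib
            exact hfib
          by_cases hqm : q • m = 0
          · -- q ∈ p, recurse on f - q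
            have hq : q ∈ p := (hann q).mpr hqm
            set f' := f - q with hf'_def
            have hf' : f' ∈ p := p.sub_mem hf hq
            have hcoeff : ∀ v, coeff v f' = if v = w then 0 else coeff v f := by
              intro v
              rw [hf'_def, coeff_sub, hq_def, coeff_monomial]
              split_ifs with h1 h2 h2
              · rw [h2, ← hc_def, sub_self]
              · exact absurd h1.symm h2
              · exact absurd h2.symm h1
              · rw [sub_zero]
            have hsupp : f'.support ⊆ f.support.erase w := by
              intro v hv
              rw [mem_support_iff, hcoeff] at hv
              rw [Finset.mem_erase]
              split_ifs at hv with h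
              · exact absurd rfl hv
              · exact ⟨h, mem_support_iff.mpr hv⟩
            have hcard : f'.support.card ≤ n := by
              calc f'.support.card ≤ (f.support.erase w).card := Finset.card_le_card hsupp
                _ = f.support.card - 1 := Finset.card_erase_of_mem hwF
                _ ≤ n := by omega
            by_cases huw : u = w
            · rw [huw]; exact hq
            · have := IHn f' hf' hcard u
              rwa [hcoeff, if_neg huw] at this
          · -- recurse on q • m, which has a shorter decomposition
            have hannm' : ∀ s : MvPolynomial (Fin r) K, s ∈ p ↔ s • (q • m) = 0 := by
              intro s
              rw [smul_smul]
              constructor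
              · intro hs
                exact (hann _).mp (Ideal.mul_mem_right q p hs)
              · intro h
                rcases hp.mem_or_mem ((hann _).mpr h) with h' | h'
                · exact h'
                · exact absurd ((hann q).mp h') hqm
            have hrep : ∃ F' : Finset (Fin r →₀ ℕ), ∃ g' : (Fin r →₀ ℕ) → M,
                F'.card ≤ F.card - 1 ∧ (∀ δ ∈ F', g' δ ∈ ℳ δ) ∧
                q • m = ∑ δ ∈ F', g' δ := by
              refine ⟨(F.erase vm).image (fun v => w + v), fun δ => q • g (δ - w), ?_, ?_, ?_⟩
              · calc ((F.erase vm).image (fun v => w + v)).card ≤ (F.erase vm).card :=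
                    Finset.card_image_le
                  _ = F.card - 1 := Finset.card_erase_of_mem hvmF
              · intro δ hδ
                obtain ⟨v, hvF, rfl⟩ := Finset.mem_image.mp hδ
                show q • g (w + v - w) ∈ ℳ (w + v)
                rw [add_tsub_cancel_left]
                exact hMgr w v c (g v) (hgmem v (Finset.mem_of_mem_erase hvF))
              · rw [Finset.sum_image (fun a _ b _ h => by
                  exact add_left_cancel h)]
                have : ∀ v ∈ F.erase vm, q • g (w + v - w) = q • g v := by
                  intro v _; rw [add_tsub_cancel_left]
                rw [Finset.sum_congr rfl this, hsum, Finset.smul_sum]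
                exact (Finset.sum_erase (f := fun v => q • g v) F hkey).symm
            have ht' : F.card - 1 < t := by
              have := Finset.card_pos.mpr hFne
              omega
            exact IH (F.card - 1) ht' (q • m) hrep hannm' f hf u
      intro f hf u
      exact inner f.support.card f hf le_rfl u
  -- initial decomposition of m₀
  obtain ⟨x, hx⟩ := hM.surjective m₀
  have hm₀sum : m₀ = ∑ u ∈ x.support, ((x u : M)) := by
    rw [← hx]
    conv_lhs => rw [← DirectSum.sum_support_of x]
    rw [map_sum]
    exact Finset.sum_congr rfl fun u _ => DirectSum.coeAddMonoidHom_of ℳ u (x u)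
  have hmonos : ∀ f ∈ p, ∀ u, (monomial u (coeff u f) : MvPolynomial (Fin r) K) ∈ p :=
    key x.support.card m₀
      ⟨x.support, fun u => (x u : M), le_rfl, fun u _ => (x u).2, hm₀sum⟩ hm₀
  -- conclude
  refine ⟨{i | (X i : MvPolynomial (Fin r) K) ∈ p}, le_antisymm ?_ ?_⟩
  · intro f hf
    rw [← support_sum_monomial_coeff f]
    refine Ideal.sum_mem _ ?_
    intro u hu
    have hmono := hmonos f hf u
    have hcu : coeff u f ≠ 0 := mem_support_iff.mp hu
    have hXu : (monomial u 1 : MvPolynomial (Fin r) K) ∈ p := by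
      have h1 : (C (coeff u f)⁻¹ : MvPolynomial (Fin r) K) * monomial u (coeff u f) ∈ p :=
        Ideal.mul_mem_left _ _ hmono
      rwa [C_mul_monomial, inv_mul_cancel₀ hcu] at h1
    have hex : ∃ i ∈ u.support, (X i : MvPolynomial (Fin r) K) ∈ p := by
      have heq : (monomial u 1 : MvPolynomial (Fin r) K)
          = ∏ i ∈ u.support, (X i : MvPolynomial (Fin r) K) ^ u i := by
        rw [monomial_eq, C_1, one_mul, Finsupp.prod]
      rw [heq, Ideal.IsPrime.prod_mem_iff] at hXu
      obtain ⟨i, hiu, hXi⟩ := hXu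
      refine ⟨i, hiu, ?_⟩
      exact (hp.pow_mem_iff_mem (u i) (Nat.pos_of_ne_zero (Finsupp.mem_support_iff.mp hiu))).mp hXi
    obtain ⟨i, hiu, hXi⟩ := hex
    have hle : Finsupp.single i 1 ≤ u :=
      Finsupp.single_le_iff.mpr (Nat.one_le_iff_ne_zero.mpr (Finsupp.mem_support_iff.mp hiu))
    have heq2 : (monomial u (coeff u f) : MvPolynomial (Fin r) K)
        = monomial (u - Finsupp.single i 1) (coeff u f) * X i := by
      rw [X, monomial_mul, mul_one, tsub_add_cancel_of_le hle]
    rw [heq2]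
    exact Ideal.mul_mem_left _ _ (Ideal.subset_span ⟨i, hXi, rfl⟩)
  · rw [Ideal.span_le]
    rintro _ ⟨i, hi, rfl⟩
    exact hi
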